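/- Prefix Property: if Y is a nonempty digit string all of whose digits are 0 or 1 and whose first digit is 1, then for all natural numbers i and j there exists j' such that G(i,j') is the concatenation of Y followed by G(i,j). In words: any string in row i prepended with any string of zeros and ones (beginning with 1) is again a string in row i. -/

import Mathlib

abbrev Digit := Fin 3

/-- Helper for `addTwo`, acting on the reversed (least significant digit first) string:
replace each digit `d` by `d - 1 (mod 3)` up to and including the first digit 0;
if no digit 0 occurs, a digit 0 is first prepended at the most significant end
(and then becomes 2). -/
def addTwoAux : List Digit → List Digit
  | [] => [2]
  | d :: rest => if d = 0 then (d + 2) :: rest else (d + 2) :: addTwoAux rest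

/-- Adding two in base 3/2: all digits at or to the right of the rightmost 0
(including that 0) are decreased by 1 modulo 3; if there is no 0, a 0 is first
prepended. -/
def addTwo (w : List Digit) : List Digit := (addTwoAux w.reverse).reverse

open Fin.NatCast in
/-- Binary representation of `j` (digits 0 and 1, most significant first, no leading
zeros), with `binRep 0 = [0]`. -/
def binRep (j : ℕ) : List Digit :=
  if j = 0 then [0] else (Nat.digits 2 j).reverse.map (fun d => (d : Digit))

/-- The grid: row 0 consists of the binary representations in increasing order, and
each subsequent row is obtained entrywise by adding two in base 3/2. -/
def G : ℕ → ℕ → List Digit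
  | 0, j => binRep j
  | i + 1, j => addTwo (G i j)

lemma addTwoAux_append_of_mem (u v : List Digit) (h : (0:Digit) ∈ u) :
    addTwoAux (u ++ v) = addTwoAux u ++ v := by
  induction u with
  | nil => simp at h
  | cons a u ih =>
    by_cases ha : a = 0
    · simp [addTwoAux, ha]
    · have h0 : (0:Digit) ∈ u := by
        rcases List.mem_cons.mp h with h | h
        · exact absurd h.symm ha
        · exact h
      simp [addTwoAux, ha, ih h0]

lemma addTwoAux_append_of_not_mem (u v : List Digit) (h : (0:Digit) ∉ u) :
    addTwoAux (u ++ v) = u.map (· + 2) ++ addTwoAux v := by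
  induction u with
  | nil => simp
  | cons a u ih =>
    have ha : a ≠ 0 := fun hh => h (by simp [hh])
    have h0 : (0:Digit) ∉ u := fun hh => h (by simp [hh])
    simp [addTwoAux, ha, ih h0]

lemma addTwo_append_of_mem (Y w : List Digit) (h : (0:Digit) ∈ w) :
    addTwo (Y ++ w) = Y ++ addTwo w := by
  unfold addTwo
  rw [List.reverse_append, addTwoAux_append_of_mem _ _ (by simpa using h),
    List.reverse_append, List.reverse_reverse]

lemma addTwoAux_of_not_mem (u : List Digit) (h : (0:Digit) ∉ u) :
    addTwoAux u = u.map (· + 2) ++ [2] := by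
  induction u with
  | nil => simp [addTwoAux]
  | cons a u ih =>
    have ha : a ≠ 0 := fun hh => h (by simp [hh])
    have h0 : (0:Digit) ∉ u := fun hh => h (by simp [hh])
    simp [addTwoAux, ha, ih h0]

lemma addTwo_of_not_mem (w : List Digit) (h : (0:Digit) ∉ w) :
    addTwo w = 2 :: w.map (· + 2) := by
  have h' : (0:Digit) ∉ w.reverse := by simpa using h
  unfold addTwo
  rw [addTwoAux_of_not_mem _ h']
  simp

lemma addTwo_append_of_not_mem (Y w : List Digit) (h : (0:Digit) ∉ w) :
    addTwo (Y ++ 0 :: w) = Y ++ addTwo w := by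
  have h' : (0:Digit) ∉ w.reverse := by simpa using h
  have e1 : (Y ++ 0 :: w).reverse = w.reverse ++ ((0:Digit) :: Y.reverse) := by
    simp
  rw [addTwo_of_not_mem w h]
  unfold addTwo
  rw [e1, addTwoAux_append_of_not_mem _ _ h']
  have : addTwoAux ((0:Digit) :: Y.reverse) = 2 :: Y.reverse := by
    simp [addTwoAux]
  rw [this]
  simp

lemma mem_binRep (j : ℕ) : ∀ d ∈ binRep j, d = 0 ∨ d = 1 := by
  intro d hd
  unfold binRep at hd
  split at hd
  · simp at hd
    simp [hd]
  · simp at hd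
    obtain ⟨k, hk, rfl⟩ := hd
    have : k < 2 := Nat.digits_lt_base (by norm_num) hk
    interval_cases k
    · left; rfl
    · right; rfl

lemma binRep_exists (Y₀ : List Digit) (h01 : ∀ d ∈ Y₀, d = 0 ∨ d = 1) (j : ℕ) :
    ∃ j', binRep j' = ((1:Digit) :: Y₀) ++ binRep j := by
  have hLmem : ∀ d ∈ ((1:Digit) :: Y₀) ++ binRep j, d = 0 ∨ d = 1 := by
    intro d hd
    rcases List.mem_append.mp hd with hd | hd
    · rcases List.mem_cons.mp hd with hd | hd
      · right; exact hd
      · exact h01 d hd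
    · exact mem_binRep j d hd
  have hlt : ∀ x ∈ ((((1:Digit) :: Y₀) ++ binRep j).reverse.map Fin.val), x < 2 := by
    intro x hx
    simp only [List.mem_map, List.mem_reverse] at hx
    obtain ⟨d, hd, rfl⟩ := hx
    rcases hLmem d hd with rfl | rfl <;> norm_num
  have hsplit : (((1:Digit) :: Y₀) ++ binRep j).reverse.map Fin.val
      = ((Y₀ ++ binRep j).reverse.map Fin.val) ++ [1] := by
    simp
  have hlast : ∀ (h : ((((1:Digit) :: Y₀) ++ binRep j).reverse.map Fin.val) ≠ []),
      (((((1:Digit) :: Y₀) ++ binRep j).reverse.map Fin.val)).getLast h ≠ 0 := by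
    intro h
    have h1 : ((((1:Digit) :: Y₀) ++ binRep j).reverse.map Fin.val).getLast? = some 1 := by
      rw [hsplit]; exact List.getLast?_concat
    rw [List.getLast?_eq_getLast h] at h1
    simp only [Option.some.injEq] at h1
    omega
  refine ⟨Nat.ofDigits 2 ((((1:Digit) :: Y₀) ++ binRep j).reverse.map Fin.val), ?_⟩
  have hdig := Nat.digits_ofDigits 2 (by norm_num)
    ((((1:Digit) :: Y₀) ++ binRep j).reverse.map Fin.val) hlt hlast
  have hne0 : Nat.ofDigits 2 ((((1:Digit) :: Y₀) ++ binRep j).reverse.map Fin.val) ≠ 0 := by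
    intro h0
    rw [h0] at hdig
    rw [hsplit] at hdig
    simp at hdig
  conv_lhs => rw [binRep]
  rw [if_neg hne0, hdig]
  rw [← List.map_reverse, List.reverse_reverse]
  simp only [bind_pure_comp, Functor.map, List.map_map]
  conv_rhs => rw [← List.map_id (((1:Digit) :: Y₀) ++ binRep j)]
  refine List.map_congr_left fun d _ => ?_
  simp [Fin.cast_val_eq_self]

lemma prefix_aux (i j : ℕ) : ∀ Y₀ : List Digit, (∀ d ∈ Y₀, d = 0 ∨ d = 1) →
    ∃ j', G i j' = ((1:Digit) :: Y₀) ++ G i j := by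
  induction i with
  | zero =>
    intro Y₀ h01
    obtain ⟨j', hj'⟩ := binRep_exists Y₀ h01 j
    exact ⟨j', hj'⟩
  | succ i ih =>
    intro Y₀ h01
    by_cases h : (0:Digit) ∈ G i j
    · obtain ⟨j', hj'⟩ := ih Y₀ h01
      refine ⟨j', ?_⟩
      show addTwo (G i j') = ((1:Digit) :: Y₀) ++ addTwo (G i j)
      rw [hj', addTwo_append_of_mem _ _ h]
    · obtain ⟨j', hj'⟩ := ih (Y₀ ++ [0]) (by
        intro d hd
        rcases List.mem_append.mp hd with hd | hd
        · exact h01 d hd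
        · left; simpa using hd)
      refine ⟨j', ?_⟩
      show addTwo (G i j') = ((1:Digit) :: Y₀) ++ addTwo (G i j)
      rw [hj']
      have : ((1:Digit) :: (Y₀ ++ [0])) ++ G i j = ((1:Digit) :: Y₀) ++ (0 :: G i j) := by
        simp
      rw [this, addTwo_append_of_not_mem _ _ h]

/-- Prefix property: any string in row `i` prepended with any string of zeros and ones
beginning with 1 is again a string in row `i`. -/
theorem prefix_property (Y : List Digit) (hne : Y ≠ [])
    (h01 : ∀ d ∈ Y, d = 0 ∨ d = 1) (hhead : Y.head? = some 1) (i j : ℕ) :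
    ∃ j' : ℕ, G i j' = Y ++ G i j := by
  obtain ⟨a, Y₀, rfl⟩ : ∃ a Y₀, Y = a :: Y₀ := by
    cases Y with
    | nil => exact absurd rfl hne
    | cons a Y₀ => exact ⟨a, Y₀, rfl⟩
  have ha : a = 1 := by simpa using hhead
  subst ha
  exact prefix_aux i j Y₀ fun d hd => h01 d (List.mem_cons_of_mem _ hd)
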